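/- Let $\xi_{k,\ell,n}$ be random variables such that for each $n$ the $\sigma$-algebras $\sigma(\xi_{k,\ell,n} : \ell \in \mathbb{N})$, $k \in \mathbb{N}$, are independent, with $\sup_{k,\ell,n} \mathbb{E}[\xi_{k,\ell,n}^8] < \infty$. Let $K_n = nK + o(n)$, $L_n = nL + o(n)$ with $K, L > 0$. Then $n^{-2} \sum_{k=1}^{K_n} \sum_{\ell=1}^{L_n} (\xi_{k,\ell,n} - \mathbb{E}[\xi_{k,\ell,n}]) \to 0$ almost surely as $n \to \infty$. -/

import Mathlib

open MeasureTheory ProbabilityTheory Filter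

lemma aux_abs_pow_le (x : ℝ) {j p : ℕ} (hj : j ≤ p) (hp : Even p) : |x| ^ j ≤ 1 + x ^ p := by
  have hxp : |x| ^ p = x ^ p := by
    rw [pow_abs, abs_of_nonneg (hp.pow_nonneg x)]
  rcases le_total |x| 1 with h | h
  · have h1 : |x| ^ j ≤ 1 := pow_le_one₀ (abs_nonneg x) h
    have h2 : 0 ≤ x ^ p := hp.pow_nonneg x
    linarith
  · have h2 : |x| ^ j ≤ |x| ^ p := pow_le_pow_right₀ h hj
    linarith

lemma aux_int_pow {Ω : Type*} [MeasureSpace Ω] [IsFiniteMeasure (ℙ : Measure Ω)]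
    {f : Ω → ℝ} (hf : Measurable f) {p : ℕ} (hp : Even p)
    (hint : Integrable (fun ω => f ω ^ p) ℙ) {j : ℕ} (hj : j ≤ p) :
    Integrable (fun ω => f ω ^ j) ℙ := by
  refine ((integrable_const (1:ℝ)).add hint).mono' (hf.pow_const j).aestronglyMeasurable ?_
  filter_upwards with ω
  have := aux_abs_pow_le (f ω) hj hp
  simpa [Real.norm_eq_abs, abs_pow] using this

lemma aux_fourth_moment {Ω : Type*} [MeasureSpace Ω] [IsProbabilityMeasure (ℙ : Measure Ω)]
    (m : ℕ → MeasurableSpace Ω) (hle : ∀ k, m k ≤ (inferInstance : MeasurableSpace Ω))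
    (hindep : iIndep m ℙ) (Y : ℕ → Ω → ℝ)
    (hYm : ∀ k, Measurable[m k] (Y k))
    (hY4 : ∀ k, Integrable (fun ω => (Y k ω) ^ 4) ℙ)
    (hY0 : ∀ k, ∫ ω, Y k ω ∂ℙ = 0) :
    ∀ s : Finset ℕ,
      (∀ j, j ≤ 4 → Integrable (fun ω => (∑ k ∈ s, Y k ω) ^ j) ℙ) ∧
      (∫ ω, (∑ k ∈ s, Y k ω) ^ 2 ∂ℙ) ≤ (∑ k ∈ s, ∫ ω, (Y k ω) ^ 2 ∂ℙ) ∧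
      (∫ ω, (∑ k ∈ s, Y k ω) ^ 4 ∂ℙ) ≤ (∑ k ∈ s, ∫ ω, (Y k ω) ^ 4 ∂ℙ)
        + 3 * (∑ k ∈ s, ∫ ω, (Y k ω) ^ 2 ∂ℙ) ^ 2 := by
  have hYmeas : ∀ k, Measurable (Y k) := fun k => (hYm k).mono (hle k) le_rfl
  have hYj : ∀ k j, j ≤ 4 → Integrable (fun ω => (Y k ω) ^ j) ℙ := by
    intro k j hj
    exact aux_int_pow (hYmeas k) ⟨2, rfl⟩ (hY4 k) hj
  intro s
  induction s using Finset.induction with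
  | empty => 
    refine ⟨fun j hj => by simpa using integrable_const ((0:ℝ)^j), by simp, by simp⟩
  | @insert a s ha IH =>
    obtain ⟨intX, IH2, IH4⟩ := IH
    set X : Ω → ℝ := fun ω => ∑ k ∈ s, Y k ω with hX
    set Z : Ω → ℝ := fun ω => Y a ω with hZ
    have hXmeas : Measurable X := by
      exact Finset.measurable_sum s fun k _ => hYmeas k
    have hZmeas : Measurable Z := hYmeas a
    -- independence of X and Z
    have hIndep : IndepFun X Z ℙ := by
      have hd : Disjoint (↑s : Set ℕ) ({a} : Set ℕ) := by
        simpa using ha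
      have h1 : Indep (⨆ k ∈ (↑s : Set ℕ), m k) (⨆ k ∈ ({a} : Set ℕ), m k) ℙ :=
        indep_iSup_of_disjoint hle hindep hd
      rw [IndepFun_iff_Indep]
      refine indep_of_indep_of_le_left (indep_of_indep_of_le_right h1 ?_) ?_
      · rw [← measurable_iff_comap_le]
        have : Measurable[m a] Z := hYm a
        exact this.mono (by simp) le_rfl
      · rw [← measurable_iff_comap_le]
        refine Finset.measurable_sum s fun k hk => ?_
        exact (hYm k).mono (le_biSup m (by exact hk)) le_rfl
    have hIndepP : ∀ i j : ℕ, IndepFun (fun ω => X ω ^ i) (fun ω => Z ω ^ j) ℙ := by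
      intro i j
      exact hIndep.comp (measurable_id.pow_const i) (measurable_id.pow_const j)
    have intZ : ∀ j, j ≤ 4 → Integrable (fun ω => Z ω ^ j) ℙ := fun j hj => hYj a j hj
    have cross : ∀ i j, i ≤ 4 → j ≤ 4 → Integrable (fun ω => X ω ^ i * Z ω ^ j) ℙ :=
      fun i j hi hj => (hIndepP i j).integrable_mul (intX i hi) (intZ j hj)
    have crossInt : ∀ i j, i ≤ 4 → j ≤ 4 →
        (∫ ω, X ω ^ i * Z ω ^ j ∂ℙ) = (∫ ω, X ω ^ i ∂ℙ) * ∫ ω, Z ω ^ j ∂ℙ :=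
      fun i j hi hj => IndepFun.integral_fun_mul_eq_mul_integral (hIndepP i j)
        (intX i hi).aestronglyMeasurable (intZ j hj).aestronglyMeasurable
    -- means
    have hZ0 : (∫ ω, Z ω ∂ℙ) = 0 := hY0 a
    have intY1 : ∀ k ∈ s, Integrable (Y k) ℙ := fun k _ => by
      simpa using hYj k 1 (by norm_num)
    have hX0 : (∫ ω, X ω ∂ℙ) = 0 := by
      rw [hX, integral_finset_sum s intY1]
      simp [hY0]
    have intX1 : Integrable X ℙ := by
      refine (intX 1 (by norm_num)).congr ?_
      filter_upwards with ω; simp [hX]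
    have intZ1 : Integrable Z ℙ := by
      refine (intZ 1 (by norm_num)).congr ?_
      filter_upwards with ω; simp
    have h2 : (2:ℕ) ≤ 4 := by norm_num
    have h3 : (3:ℕ) ≤ 4 := by norm_num
    have h4 : (4:ℕ) ≤ 4 := le_rfl
    have i11 : Integrable (fun ω => X ω * Z ω) ℙ := by
      simpa using cross 1 1 (by norm_num) (by norm_num)
    have i21 : Integrable (fun ω => X ω ^ 2 * Z ω) ℙ := by
      simpa using cross 2 1 h2 (by norm_num)
    have i12 : Integrable (fun ω => X ω * Z ω ^ 2) ℙ := by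
      simpa using cross 1 2 (by norm_num) h2
    have i30 : Integrable (fun ω => X ω ^ 3 * Z ω) ℙ := by
      simpa using cross 3 1 h3 (by norm_num)
    have i22 : Integrable (fun ω => X ω ^ 2 * Z ω ^ 2) ℙ := cross 2 2 h2 h2
    have i13 : Integrable (fun ω => X ω * Z ω ^ 3) ℙ := by
      simpa using cross 1 3 (by norm_num) h3
    have intX' : ∀ j, j ≤ 4 → Integrable (fun ω => X ω ^ j) ℙ := fun j hj => intX j hj
    have intZ' : ∀ j, j ≤ 4 → Integrable (fun ω => Z ω ^ j) ℙ := fun j hj => intZ j hj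
    have hc11 : Integrable (fun ω => 2 * (X ω * Z ω)) ℙ := i11.const_mul 2
    have hc21 : Integrable (fun ω => 3 * (X ω ^ 2 * Z ω)) ℙ := i21.const_mul 3
    have hc12 : Integrable (fun ω => 3 * (X ω * Z ω ^ 2)) ℙ := i12.const_mul 3
    have hc30 : Integrable (fun ω => 4 * (X ω ^ 3 * Z ω)) ℙ := i30.const_mul 4
    have hc22 : Integrable (fun ω => 6 * (X ω ^ 2 * Z ω ^ 2)) ℙ := i22.const_mul 6
    have hc13 : Integrable (fun ω => 4 * (X ω * Z ω ^ 3)) ℙ := i13.const_mul 4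
    have hg2 : Integrable (fun ω => X ω ^ 2 + 2 * (X ω * Z ω)) ℙ := (intX' 2 h2).add hc11
    have hq2 : Integrable (fun ω => X ω ^ 4 + 4 * (X ω ^ 3 * Z ω)) ℙ := (intX' 4 h4).add hc30
    have hq3 : Integrable (fun ω => X ω ^ 4 + 4 * (X ω ^ 3 * Z ω)
        + 6 * (X ω ^ 2 * Z ω ^ 2)) ℙ := hq2.add hc22
    have hq4 : Integrable (fun ω => X ω ^ 4 + 4 * (X ω ^ 3 * Z ω)
        + 6 * (X ω ^ 2 * Z ω ^ 2) + 4 * (X ω * Z ω ^ 3)) ℙ := hq3.add hc13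
    have ht3 : Integrable (fun ω => X ω ^ 3 + 3 * (X ω ^ 2 * Z ω)) ℙ := (intX' 3 h3).add hc21
    have ht4 : Integrable (fun ω => X ω ^ 3 + 3 * (X ω ^ 2 * Z ω)
        + 3 * (X ω * Z ω ^ 2)) ℙ := ht3.add hc12
    have E2 : (∫ ω, (X ω + Z ω) ^ 2 ∂ℙ) = (∫ ω, X ω ^ 2 ∂ℙ) + ∫ ω, Z ω ^ 2 ∂ℙ := by
      have exp2 : (fun ω => (X ω + Z ω) ^ 2)
          = fun ω => X ω ^ 2 + 2 * (X ω * Z ω) + Z ω ^ 2 := by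
        funext ω; ring
      rw [exp2, integral_add hg2 (intZ' 2 h2),
        integral_add (intX' 2 h2) hc11, integral_const_mul _ _]
      have h := crossInt 1 1 (by norm_num) (by norm_num)
      simp only [pow_one] at h
      rw [h, hZ0, mul_zero, mul_zero, add_zero]
    have E4 : (∫ ω, (X ω + Z ω) ^ 4 ∂ℙ)
        = (∫ ω, X ω ^ 4 ∂ℙ) + 6 * ((∫ ω, X ω ^ 2 ∂ℙ) * ∫ ω, Z ω ^ 2 ∂ℙ)
          + ∫ ω, Z ω ^ 4 ∂ℙ := by
      have exp4 : (fun ω => (X ω + Z ω) ^ 4) = fun ω =>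
          X ω ^ 4 + 4 * (X ω ^ 3 * Z ω) + 6 * (X ω ^ 2 * Z ω ^ 2)
            + 4 * (X ω * Z ω ^ 3) + Z ω ^ 4 := by
        funext ω; ring
      rw [exp4, integral_add hq4 (intZ' 4 h4), integral_add hq3 hc13,
        integral_add hq2 hc22, integral_add (intX' 4 h4) hc30,
        integral_const_mul _ _, integral_const_mul _ _, integral_const_mul _ _]
      have e30 : (∫ ω, X ω ^ 3 * Z ω ∂ℙ) = 0 := by
        have h := crossInt 3 1 h3 (by norm_num)
        simp only [pow_one] at h
        rw [h, hZ0, mul_zero]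
      have e13 : (∫ ω, X ω * Z ω ^ 3 ∂ℙ) = 0 := by
        have h := crossInt 1 3 (by norm_num) h3
        simp only [pow_one] at h
        rw [h, hX0, zero_mul]
      have e22 := crossInt 2 2 h2 h2
      rw [e30, e13, e22]; ring
    have intS : ∀ j, j ≤ 4 → Integrable (fun ω => (X ω + Z ω) ^ j) ℙ := by
      intro j hj
      interval_cases j
      · simpa using integrable_const (1:ℝ)
      · refine (intX1.add intZ1).congr ?_
        filter_upwards with ω; simp
      · refine (hg2.add (intZ' 2 h2)).congr ?_
        filter_upwards with ω; simp only [Pi.add_apply]; ring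
      · refine (ht4.add (intZ' 3 h3)).congr ?_
        filter_upwards with ω; simp only [Pi.add_apply]; ring
      · refine (hq4.add (intZ' 4 h4)).congr ?_
        filter_upwards with ω; simp only [Pi.add_apply]; ring
    have hrw : ∀ j : ℕ, (fun ω => (∑ k ∈ insert a s, Y k ω) ^ j)
        = fun ω => (X ω + Z ω) ^ j := by
      intro j; funext ω; rw [Finset.sum_insert ha]; ring
    have hZ2nn : 0 ≤ ∫ ω, Z ω ^ 2 ∂ℙ := integral_nonneg fun ω => by positivity
    have hX2nn : 0 ≤ ∫ ω, X ω ^ 2 ∂ℙ := integral_nonneg fun ω => by positivity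
    refine ⟨?_, ?_, ?_⟩
    · intro j hj
      rw [hrw j]
      exact intS j hj
    · rw [hrw 2, E2, Finset.sum_insert ha]
      have IH2' : (∫ ω, X ω ^ 2 ∂ℙ) ≤ ∑ k ∈ s, ∫ ω, Y k ω ^ 2 ∂ℙ := IH2
      linarith [IH2']
    · rw [hrw 4, E4, Finset.sum_insert ha, Finset.sum_insert ha]
      have IH2' : (∫ ω, X ω ^ 2 ∂ℙ) ≤ ∑ k ∈ s, ∫ ω, Y k ω ^ 2 ∂ℙ := IH2
      have IH4' : (∫ ω, X ω ^ 4 ∂ℙ) ≤ (∑ k ∈ s, ∫ ω, Y k ω ^ 4 ∂ℙ)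
          + 3 * (∑ k ∈ s, ∫ ω, Y k ω ^ 2 ∂ℙ) ^ 2 := IH4
      nlinarith [IH4', mul_le_mul_of_nonneg_right IH2' hZ2nn,
        sq_nonneg (∫ ω, Z ω ^ 2 ∂ℙ)]

theorem stmt3
    {Ω : Type*} [MeasureSpace Ω] [IsProbabilityMeasure (ℙ : Measure Ω)]
    (ξ : ℕ → ℕ → ℕ → Ω → ℝ)
    (hmeas : ∀ n k ℓ, Measurable (ξ n k ℓ))
    (hindep : ∀ n, iIndep
      (fun k : ℕ => ⨆ ℓ : ℕ, MeasurableSpace.comap (ξ n k ℓ) (borel ℝ)) ℙ)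
    (M : ℝ)
    (hmom : ∀ n k ℓ, ∫ ω, (ξ n k ℓ ω) ^ 8 ∂ℙ ≤ M)
    (hint : ∀ n k ℓ, Integrable (fun ω => (ξ n k ℓ ω) ^ 8) ℙ)
    (K L : ℝ) (hK : 0 < K) (hL : 0 < L)
    (Kn Ln : ℕ → ℕ) (hKn0 : ∀ n, 0 < Kn n) (hLn0 : ∀ n, 0 < Ln n)
    (hKn : Tendsto (fun n => (Kn n : ℝ) / n) atTop (nhds K))
    (hLn : Tendsto (fun n => (Ln n : ℝ) / n) atTop (nhds L)) :
    ∀ᵐ ω ∂(ℙ : Measure Ω),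
      Tendsto (fun n : ℕ =>
        (n : ℝ) ^ (-2 : ℤ) *
          ∑ k ∈ Finset.Icc 1 (Kn n), ∑ ℓ ∈ Finset.Icc 1 (Ln n),
            (ξ n k ℓ ω - ∫ ω', ξ n k ℓ ω' ∂ℙ))
        atTop (nhds 0) := by
  classical
  have hM0 : 0 ≤ M := le_trans (integral_nonneg fun ω => by positivity) (hmom 0 0 0)
  set A : ℝ := M + 1 with hA
  have hA1 : (1:ℝ) ≤ A := by rw [hA]; linarith
  have hA0 : (0:ℝ) ≤ A := by linarith
  set A2 : ℝ := 2*A + 2*A^2 with hA2d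
  set A4 : ℝ := 8*A + 8*A^4 with hA4d
  have hA2nn : 0 ≤ A2 := by rw [hA2d]; nlinarith
  have hA4nn : 0 ≤ A4 := by rw [hA4d]; nlinarith [pow_nonneg hA0 4]
  have intpow : ∀ n k ℓ (j : ℕ), j ≤ 8 → Integrable (fun ω => ξ n k ℓ ω ^ j) ℙ :=
    fun n k ℓ j hj => aux_int_pow (hmeas n k ℓ) ⟨4, rfl⟩ (hint n k ℓ) hj
  have intξ : ∀ n k ℓ, Integrable (ξ n k ℓ) ℙ := by
    intro n k ℓ
    refine (intpow n k ℓ 1 (by norm_num)).congr ?_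
    filter_upwards with ω; simp
  have momabs : ∀ n k ℓ (j:ℕ), j ≤ 8 → (∫ ω, |ξ n k ℓ ω| ^ j ∂ℙ) ≤ A := by
    intro n k ℓ j hj
    have h1 : Integrable (fun ω => |ξ n k ℓ ω| ^ j) ℙ := by
      refine (intpow n k ℓ j hj).abs.congr ?_
      filter_upwards with ω
      exact (pow_abs _ _).symm
    calc (∫ ω, |ξ n k ℓ ω| ^ j ∂ℙ) ≤ ∫ ω, 1 + ξ n k ℓ ω ^ 8 ∂ℙ :=
          integral_mono h1 ((integrable_const 1).add (hint n k ℓ))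
            (fun ω => aux_abs_pow_le _ hj ⟨4, rfl⟩)
      _ = 1 + ∫ ω, ξ n k ℓ ω ^ 8 ∂ℙ := by
          rw [integral_add (integrable_const 1) (hint n k ℓ), integral_const]; simp
      _ ≤ A := by have := hmom n k ℓ; rw [hA]; linarith
  have momsq : ∀ n k ℓ, (∫ ω, ξ n k ℓ ω ^ 2 ∂ℙ) ≤ A := by
    intro n k ℓ
    have h := momabs n k ℓ 2 (by norm_num)
    simpa [sq_abs] using h
  have habs4 : ∀ x : ℝ, |x| ^ 4 = x ^ 4 := fun x => by
    rw [pow_abs, abs_of_nonneg (by positivity)]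
  have mom4 : ∀ n k ℓ, (∫ ω, ξ n k ℓ ω ^ 4 ∂ℙ) ≤ A := by
    intro n k ℓ
    have h := momabs n k ℓ 4 (by norm_num)
    simp only [habs4] at h
    exact h
  set c : ℕ → ℕ → ℕ → ℝ := fun n k ℓ => ∫ ω', ξ n k ℓ ω' ∂ℙ with hcdef
  have momc : ∀ n k ℓ, |c n k ℓ| ≤ A := by
    intro n k ℓ
    have h1 : |c n k ℓ| ≤ ∫ ω, |ξ n k ℓ ω| ∂ℙ := by
      rw [hcdef]
      calc |∫ ω', ξ n k ℓ ω' ∂ℙ| = ‖∫ ω', ξ n k ℓ ω' ∂ℙ‖ := (Real.norm_eq_abs _).symm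
        _ ≤ ∫ ω, ‖ξ n k ℓ ω‖ ∂ℙ := norm_integral_le_integral_norm _
        _ = ∫ ω, |ξ n k ℓ ω| ∂ℙ := by simp [Real.norm_eq_abs]
    exact le_trans h1 (by simpa using momabs n k ℓ 1 (by norm_num))
  have meascent : ∀ n k ℓ, Measurable (fun ω => ξ n k ℓ ω - c n k ℓ) :=
    fun n k ℓ => (hmeas n k ℓ).sub measurable_const
  have ptsq : ∀ n k ℓ ω, (ξ n k ℓ ω - c n k ℓ)^2 ≤ 2 * ξ n k ℓ ω^2 + 2 * c n k ℓ^2 := by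
    intro n k ℓ ω; nlinarith [sq_nonneg (ξ n k ℓ ω + c n k ℓ)]
  have pt4 : ∀ n k ℓ ω, (ξ n k ℓ ω - c n k ℓ)^4 ≤ 8 * ξ n k ℓ ω^4 + 8 * c n k ℓ^4 := by
    intro n k ℓ ω
    nlinarith [sq_nonneg (ξ n k ℓ ω + c n k ℓ), sq_nonneg (ξ n k ℓ ω - c n k ℓ),
      sq_nonneg (ξ n k ℓ ω^2 - c n k ℓ^2), sq_nonneg (ξ n k ℓ ω^2 + c n k ℓ^2)]
  have intdom2 : ∀ n k ℓ, Integrable (fun ω => 2 * ξ n k ℓ ω^2 + 2 * c n k ℓ^2) ℙ :=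
    fun n k ℓ => ((intpow n k ℓ 2 (by norm_num)).const_mul 2).add (integrable_const _)
  have intdom4 : ∀ n k ℓ, Integrable (fun ω => 8 * ξ n k ℓ ω^4 + 8 * c n k ℓ^4) ℙ :=
    fun n k ℓ => ((intpow n k ℓ 4 (by norm_num)).const_mul 8).add (integrable_const _)
  have intcent2 : ∀ n k ℓ, Integrable (fun ω => (ξ n k ℓ ω - c n k ℓ)^2) ℙ := by
    intro n k ℓ
    refine (intdom2 n k ℓ).mono' ((meascent n k ℓ).pow_const 2).aestronglyMeasurable ?_
    filter_upwards with ω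
    rw [Real.norm_eq_abs, abs_of_nonneg (by positivity)]
    exact ptsq n k ℓ ω
  have intcent4 : ∀ n k ℓ, Integrable (fun ω => (ξ n k ℓ ω - c n k ℓ)^4) ℙ := by
    intro n k ℓ
    refine (intdom4 n k ℓ).mono' ((meascent n k ℓ).pow_const 4).aestronglyMeasurable ?_
    filter_upwards with ω
    rw [Real.norm_eq_abs, abs_of_nonneg (by positivity)]
    exact pt4 n k ℓ ω
  have momcent2 : ∀ n k ℓ, (∫ ω, (ξ n k ℓ ω - c n k ℓ)^2 ∂ℙ) ≤ A2 := by
    intro n k ℓ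
    have h2 : c n k ℓ^2 ≤ A^2 := by
      rw [← sq_abs]; exact pow_le_pow_left₀ (abs_nonneg _) (momc n k ℓ) 2
    calc (∫ ω, (ξ n k ℓ ω - c n k ℓ)^2 ∂ℙ)
        ≤ ∫ ω, 2 * ξ n k ℓ ω^2 + 2 * c n k ℓ^2 ∂ℙ :=
          integral_mono (intcent2 n k ℓ) (intdom2 n k ℓ) (fun ω => ptsq n k ℓ ω)
      _ = 2 * (∫ ω, ξ n k ℓ ω^2 ∂ℙ) + 2 * c n k ℓ^2 := by
          rw [integral_add ((intpow n k ℓ 2 (by norm_num)).const_mul 2) (integrable_const _),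
            integral_const_mul _ _, integral_const]; simp
      _ ≤ A2 := by rw [hA2d]; have := momsq n k ℓ; linarith
  have momcent4 : ∀ n k ℓ, (∫ ω, (ξ n k ℓ ω - c n k ℓ)^4 ∂ℙ) ≤ A4 := by
    intro n k ℓ
    have h2 : c n k ℓ^4 ≤ A^4 := by
      rw [← habs4]; exact pow_le_pow_left₀ (abs_nonneg _) (momc n k ℓ) 4
    calc (∫ ω, (ξ n k ℓ ω - c n k ℓ)^4 ∂ℙ)
        ≤ ∫ ω, 8 * ξ n k ℓ ω^4 + 8 * c n k ℓ^4 ∂ℙ :=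
          integral_mono (intcent4 n k ℓ) (intdom4 n k ℓ) (fun ω => pt4 n k ℓ ω)
      _ = 8 * (∫ ω, ξ n k ℓ ω^4 ∂ℙ) + 8 * c n k ℓ^4 := by
          rw [integral_add ((intpow n k ℓ 4 (by norm_num)).const_mul 8) (integrable_const _),
            integral_const_mul _ _, integral_const]; simp
      _ ≤ A4 := by rw [hA4d]; have := mom4 n k ℓ; linarith
  -- group sums over ℓ
  set Y : ℕ → ℕ → Ω → ℝ :=
    fun n k ω => ∑ ℓ ∈ Finset.Icc 1 (Ln n), (ξ n k ℓ ω - c n k ℓ) with hYdef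
  have hYmeas' : ∀ n k, Measurable (Y n k) := fun n k =>
    Finset.measurable_sum _ fun ℓ _ => meascent n k ℓ
  have cardL : ∀ n, (((Finset.Icc 1 (Ln n)).card : ℕ) : ℝ) = (Ln n : ℝ) := by
    intro n; rw [Nat.card_Icc]; simp
  have hYpt : ∀ (n k j : ℕ) (ω : Ω), |Y n k ω| ^ (j+1) ≤
      (((Finset.Icc 1 (Ln n)).card : ℕ) : ℝ) ^ j *
        ∑ ℓ ∈ Finset.Icc 1 (Ln n), |ξ n k ℓ ω - c n k ℓ| ^ (j+1) := by
    intro n k j ω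
    have h1 : |Y n k ω| ≤ ∑ ℓ ∈ Finset.Icc 1 (Ln n), |ξ n k ℓ ω - c n k ℓ| := by
      rw [hYdef]; exact Finset.abs_sum_le_sum_abs _ _
    have h2 : |Y n k ω| ^ (j+1) ≤
        (∑ ℓ ∈ Finset.Icc 1 (Ln n), |ξ n k ℓ ω - c n k ℓ|) ^ (j+1) :=
      pow_le_pow_left₀ (abs_nonneg _) h1 _
    have h3 := pow_sum_div_card_le_sum_pow (s := Finset.Icc 1 (Ln n))
      (f := fun ℓ => |ξ n k ℓ ω - c n k ℓ|) (fun i _ => abs_nonneg _) j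
    have hcard : (0:ℝ) < (((Finset.Icc 1 (Ln n)).card : ℕ) : ℝ) ^ j := by
      rw [cardL]; have := hLn0 n; positivity
    rw [div_le_iff₀ hcard] at h3
    calc |Y n k ω| ^ (j+1) ≤ _ := h2
      _ ≤ (∑ ℓ ∈ Finset.Icc 1 (Ln n), |ξ n k ℓ ω - c n k ℓ| ^ (j+1)) *
          (((Finset.Icc 1 (Ln n)).card : ℕ) : ℝ) ^ j := h3
      _ = _ := mul_comm _ _
  have intY4 : ∀ n k, Integrable (fun ω => Y n k ω ^ 4) ℙ := by
    intro n k
    refine (Integrable.const_mul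
      (integrable_finset_sum (Finset.Icc 1 (Ln n)) fun ℓ _ => intcent4 n k ℓ)
      ((((Finset.Icc 1 (Ln n)).card : ℕ) : ℝ) ^ 3)).mono'
      ((hYmeas' n k).pow_const 4).aestronglyMeasurable ?_
    filter_upwards with ω
    rw [Real.norm_eq_abs, ← pow_abs]
    have h := hYpt n k 3 ω
    have he : (∑ ℓ ∈ Finset.Icc 1 (Ln n), |ξ n k ℓ ω - c n k ℓ| ^ 4)
        = ∑ ℓ ∈ Finset.Icc 1 (Ln n), (ξ n k ℓ ω - c n k ℓ) ^ 4 :=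
      Finset.sum_congr rfl fun ℓ _ => habs4 _
    rw [he] at h
    exact h
  have intY2 : ∀ n k, Integrable (fun ω => Y n k ω ^ 2) ℙ := fun n k =>
    aux_int_pow (hYmeas' n k) ⟨2, rfl⟩ (intY4 n k) (by norm_num)
  have momY4 : ∀ n k, (∫ ω, Y n k ω ^ 4 ∂ℙ) ≤ (Ln n : ℝ)^4 * A4 := by
    intro n k
    have hpt : ∀ ω, Y n k ω ^ 4 ≤
        (Ln n : ℝ)^3 * ∑ ℓ ∈ Finset.Icc 1 (Ln n), (ξ n k ℓ ω - c n k ℓ)^4 := by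
      intro ω
      have h := hYpt n k 3 ω
      rw [habs4, cardL] at h
      have he : (∑ ℓ ∈ Finset.Icc 1 (Ln n), |ξ n k ℓ ω - c n k ℓ| ^ 4)
          = ∑ ℓ ∈ Finset.Icc 1 (Ln n), (ξ n k ℓ ω - c n k ℓ) ^ 4 :=
        Finset.sum_congr rfl fun ℓ _ => habs4 _
      rwa [he] at h
    have hint2 : Integrable (fun ω =>
        (Ln n : ℝ)^3 * ∑ ℓ ∈ Finset.Icc 1 (Ln n), (ξ n k ℓ ω - c n k ℓ)^4) ℙ :=
      (integrable_finset_sum _ fun ℓ _ => intcent4 n k ℓ).const_mul _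
    calc (∫ ω, Y n k ω ^ 4 ∂ℙ) ≤ ∫ ω,
          (Ln n : ℝ)^3 * ∑ ℓ ∈ Finset.Icc 1 (Ln n), (ξ n k ℓ ω - c n k ℓ)^4 ∂ℙ :=
        integral_mono (intY4 n k) hint2 hpt
      _ = (Ln n : ℝ)^3 * ∑ ℓ ∈ Finset.Icc 1 (Ln n), ∫ ω, (ξ n k ℓ ω - c n k ℓ)^4 ∂ℙ := by
        rw [integral_const_mul _ _, integral_finset_sum _ fun ℓ _ => intcent4 n k ℓ]
      _ ≤ (Ln n : ℝ)^3 * ((Ln n : ℝ) * A4) := by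
        refine mul_le_mul_of_nonneg_left ?_ (by positivity)
        calc (∑ ℓ ∈ Finset.Icc 1 (Ln n), ∫ ω, (ξ n k ℓ ω - c n k ℓ)^4 ∂ℙ)
            ≤ ∑ _ℓ ∈ Finset.Icc 1 (Ln n), A4 :=
              Finset.sum_le_sum fun ℓ _ => momcent4 n k ℓ
          _ = (Ln n : ℝ) * A4 := by rw [Finset.sum_const, nsmul_eq_mul, cardL]
      _ = (Ln n : ℝ)^4 * A4 := by ring
  have momY2 : ∀ n k, (∫ ω, Y n k ω ^ 2 ∂ℙ) ≤ (Ln n : ℝ)^2 * A2 := by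
    intro n k
    have hpt : ∀ ω, Y n k ω ^ 2 ≤
        (Ln n : ℝ)^1 * ∑ ℓ ∈ Finset.Icc 1 (Ln n), (ξ n k ℓ ω - c n k ℓ)^2 := by
      intro ω
      have h := hYpt n k 1 ω
      rw [sq_abs, cardL] at h
      have he : (∑ ℓ ∈ Finset.Icc 1 (Ln n), |ξ n k ℓ ω - c n k ℓ| ^ 2)
          = ∑ ℓ ∈ Finset.Icc 1 (Ln n), (ξ n k ℓ ω - c n k ℓ) ^ 2 :=
        Finset.sum_congr rfl fun ℓ _ => sq_abs _
      rwa [he] at h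
    have hint2 : Integrable (fun ω =>
        (Ln n : ℝ)^1 * ∑ ℓ ∈ Finset.Icc 1 (Ln n), (ξ n k ℓ ω - c n k ℓ)^2) ℙ :=
      (integrable_finset_sum _ fun ℓ _ => intcent2 n k ℓ).const_mul _
    calc (∫ ω, Y n k ω ^ 2 ∂ℙ) ≤ ∫ ω,
          (Ln n : ℝ)^1 * ∑ ℓ ∈ Finset.Icc 1 (Ln n), (ξ n k ℓ ω - c n k ℓ)^2 ∂ℙ :=
        integral_mono (intY2 n k) hint2 hpt
      _ = (Ln n : ℝ)^1 * ∑ ℓ ∈ Finset.Icc 1 (Ln n), ∫ ω, (ξ n k ℓ ω - c n k ℓ)^2 ∂ℙ := by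
        rw [integral_const_mul _ _, integral_finset_sum _ fun ℓ _ => intcent2 n k ℓ]
      _ ≤ (Ln n : ℝ)^1 * ((Ln n : ℝ) * A2) := by
        refine mul_le_mul_of_nonneg_left ?_ (by positivity)
        calc (∑ ℓ ∈ Finset.Icc 1 (Ln n), ∫ ω, (ξ n k ℓ ω - c n k ℓ)^2 ∂ℙ)
            ≤ ∑ _ℓ ∈ Finset.Icc 1 (Ln n), A2 :=
              Finset.sum_le_sum fun ℓ _ => momcent2 n k ℓ
          _ = (Ln n : ℝ) * A2 := by rw [Finset.sum_const, nsmul_eq_mul, cardL]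
      _ = (Ln n : ℝ)^2 * A2 := by ring
  have hY0 : ∀ n k, (∫ ω, Y n k ω ∂ℙ) = 0 := by
    intro n k
    have hz : ∀ ℓ ∈ Finset.Icc 1 (Ln n), (∫ ω, (ξ n k ℓ ω - c n k ℓ) ∂ℙ) = 0 := by
      intro ℓ _
      rw [integral_sub (intξ n k ℓ) (integrable_const _), integral_const]
      simp [hcdef]
    have : (∫ ω, Y n k ω ∂ℙ)
        = ∑ ℓ ∈ Finset.Icc 1 (Ln n), ∫ ω, (ξ n k ℓ ω - c n k ℓ) ∂ℙ := by
      rw [hYdef]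
      exact integral_finset_sum _ fun ℓ _ => (intξ n k ℓ).sub (integrable_const _)
    rw [this, Finset.sum_eq_zero hz]
  -- sigma algebras and independence
  set mσ : ℕ → ℕ → MeasurableSpace Ω :=
    fun n k => ⨆ ℓ, MeasurableSpace.comap (ξ n k ℓ) (borel ℝ) with hmσ
  have hbeq : (inferInstance : MeasurableSpace ℝ) = borel ℝ := BorelSpace.measurable_eq
  have hble : ∀ n k ℓ, MeasurableSpace.comap (ξ n k ℓ) (inferInstance : MeasurableSpace ℝ)
      = MeasurableSpace.comap (ξ n k ℓ) (borel ℝ) := fun n k ℓ => by rw [← hbeq]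
  have hmle : ∀ n k, mσ n k ≤ (inferInstance : MeasurableSpace Ω) := by
    intro n k
    rw [hmσ]
    refine iSup_le fun ℓ => ?_
    rw [← hble n k ℓ]
    exact measurable_iff_comap_le.mp (hmeas n k ℓ)
  have hYmσ : ∀ n k, Measurable[mσ n k] (Y n k) := by
    intro n k
    rw [hYdef]
    refine Finset.measurable_sum _ fun ℓ _ => Measurable.sub ?_ measurable_const
    have h1 : MeasurableSpace.comap (ξ n k ℓ) (borel ℝ) ≤ mσ n k := by
      rw [hmσ]; exact le_iSup (fun ℓ => MeasurableSpace.comap (ξ n k ℓ) (borel ℝ)) ℓ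
    exact measurable_iff_comap_le.mpr (by rw [hble n k ℓ]; exact h1)
  have main : ∀ n, _ := fun n =>
    aux_fourth_moment (mσ n) (hmle n) (hindep n) (Y n) (hYmσ n) (intY4 n) (hY0 n)
      (Finset.Icc 1 (Kn n))
  set S : ℕ → Ω → ℝ := fun n ω => ∑ k ∈ Finset.Icc 1 (Kn n), Y n k ω with hSdef
  have hSmeas : ∀ n, Measurable (S n) := fun n =>
    Finset.measurable_sum _ fun k _ => hYmeas' n k
  have intS4 : ∀ n, Integrable (fun ω => S n ω ^ 4) ℙ := fun n => (main n).1 4 le_rfl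
  have cardK : ∀ n, (((Finset.Icc 1 (Kn n)).card : ℕ) : ℝ) = (Kn n : ℝ) := by
    intro n; rw [Nat.card_Icc]; simp
  have hS4 : ∀ n, (∫ ω, S n ω ^ 4 ∂ℙ) ≤
      (Kn n : ℝ) * ((Ln n : ℝ)^4 * A4) + 3 * ((Kn n : ℝ) * ((Ln n : ℝ)^2 * A2))^2 := by
    intro n
    have h := (main n).2.2
    have b4 : (∑ k ∈ Finset.Icc 1 (Kn n), ∫ ω, Y n k ω ^ 4 ∂ℙ)
        ≤ (Kn n : ℝ) * ((Ln n : ℝ)^4 * A4) := by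
      calc (∑ k ∈ Finset.Icc 1 (Kn n), ∫ ω, Y n k ω ^ 4 ∂ℙ)
          ≤ ∑ _k ∈ Finset.Icc 1 (Kn n), (Ln n : ℝ)^4 * A4 :=
            Finset.sum_le_sum fun k _ => momY4 n k
        _ = (Kn n : ℝ) * ((Ln n : ℝ)^4 * A4) := by
            rw [Finset.sum_const, nsmul_eq_mul, cardK]
    have b2 : (∑ k ∈ Finset.Icc 1 (Kn n), ∫ ω, Y n k ω ^ 2 ∂ℙ)
        ≤ (Kn n : ℝ) * ((Ln n : ℝ)^2 * A2) := by
      calc (∑ k ∈ Finset.Icc 1 (Kn n), ∫ ω, Y n k ω ^ 2 ∂ℙ)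
          ≤ ∑ _k ∈ Finset.Icc 1 (Kn n), (Ln n : ℝ)^2 * A2 :=
            Finset.sum_le_sum fun k _ => momY2 n k
        _ = (Kn n : ℝ) * ((Ln n : ℝ)^2 * A2) := by
            rw [Finset.sum_const, nsmul_eq_mul, cardK]
    have b2nn : 0 ≤ ∑ k ∈ Finset.Icc 1 (Kn n), ∫ ω, Y n k ω ^ 2 ∂ℙ :=
      Finset.sum_nonneg fun k _ => integral_nonneg fun ω => by positivity
    have hsq := pow_le_pow_left₀ b2nn b2 2
    calc (∫ ω, S n ω ^ 4 ∂ℙ) ≤ _ := h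
      _ ≤ (Kn n : ℝ) * ((Ln n : ℝ)^4 * A4) + 3 * ((Kn n : ℝ) * ((Ln n : ℝ)^2 * A2))^2 := by
        linarith
  -- linear bounds on Kn, Ln
  obtain ⟨DK, hDK⟩ := hKn.bddAbove_range
  obtain ⟨DL, hDL⟩ := hLn.bddAbove_range
  set D : ℝ := max (max DK DL) 1 with hDdef
  have hD1 : (1:ℝ) ≤ D := le_max_right _ _
  have hD0 : (0:ℝ) ≤ D := by linarith
  have hKD : ∀ n : ℕ, 1 ≤ n → (Kn n : ℝ) ≤ D * n := by
    intro n hn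
    have hn0 : (0:ℝ) < n := by exact_mod_cast hn
    have h1 : (Kn n : ℝ)/n ≤ D :=
      le_trans (hDK (Set.mem_range_self n)) (le_trans (le_max_left _ _) (le_max_left _ _))
    calc (Kn n : ℝ) = ((Kn n : ℝ)/n)*n := by field_simp
      _ ≤ D * n := mul_le_mul_of_nonneg_right h1 hn0.le
  have hLD : ∀ n : ℕ, 1 ≤ n → (Ln n : ℝ) ≤ D * n := by
    intro n hn
    have hn0 : (0:ℝ) < n := by exact_mod_cast hn
    have h1 : (Ln n : ℝ)/n ≤ D :=
      le_trans (hDL (Set.mem_range_self n)) (le_trans (le_max_right _ _) (le_max_left _ _))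
    calc (Ln n : ℝ) = ((Ln n : ℝ)/n)*n := by field_simp
      _ ≤ D * n := mul_le_mul_of_nonneg_right h1 hn0.le
  set C : ℝ := D^5*A4 + 3*(D^3*A2)^2 with hCdef
  have hC0 : 0 ≤ C := by
    rw [hCdef]
    have h1 : 0 ≤ D^5*A4 := mul_nonneg (pow_nonneg hD0 5) hA4nn
    positivity
  set f : ℕ → Ω → ℝ := fun n ω => ((n:ℝ)^(-2:ℤ) * S n ω)^4 with hfdef
  have hfnn : ∀ n ω, 0 ≤ f n ω := fun n ω => by rw [hfdef]; positivity
  have hfmeas : ∀ n, Measurable (f n) := by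
    intro n
    rw [hfdef]
    exact (Measurable.const_mul (hSmeas n) _).pow_const 4
  have hfint : ∀ n, Integrable (f n) ℙ := by
    intro n
    have he : (f n) = fun ω => ((n:ℝ)^(-2:ℤ))^4 * S n ω ^ 4 := by
      funext ω; simp only [hfdef]; ring
    rw [he]; exact (intS4 n).const_mul _
  have hfbd : ∀ n : ℕ, 1 ≤ n → (∫ ω, f n ω ∂ℙ) ≤ C / (n:ℝ)^2 := by
    intro n hn
    have hn0 : (0:ℝ) < n := by exact_mod_cast hn
    have hn1 : (1:ℝ) ≤ n := by exact_mod_cast hn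
    have ez : ((n:ℝ)^(-2:ℤ))^4 = ((n:ℝ)^8)⁻¹ := by
      rw [← zpow_natCast ((n:ℝ)^(-2:ℤ)) 4, ← zpow_mul]
      norm_num [zpow_neg]
    have e1 : (∫ ω, f n ω ∂ℙ) = ((n:ℝ)^8)⁻¹ * ∫ ω, S n ω ^ 4 ∂ℙ := by
      have he : (f n) = fun ω => ((n:ℝ)^8)⁻¹ * S n ω ^ 4 := by
        funext ω; simp only [hfdef]; rw [mul_pow, ez]
      rw [he, integral_const_mul _ _]
    have hB : (∫ ω, S n ω ^ 4 ∂ℙ) ≤ C * (n:ℝ)^6 := by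
      have h := hS4 n
      have hKnn : (0:ℝ) ≤ (Kn n : ℝ) := by positivity
      have hLnn : (0:ℝ) ≤ (Ln n : ℝ) := by positivity
      have t1 : (Kn n : ℝ) * ((Ln n : ℝ)^4 * A4) ≤ (D*n) * ((D*n)^4 * A4) := by
        have hL4 : (Ln n : ℝ)^4 ≤ (D*n)^4 := pow_le_pow_left₀ hLnn (hLD n hn) 4
        exact mul_le_mul (hKD n hn) (mul_le_mul_of_nonneg_right hL4 hA4nn)
          (by positivity) (by positivity)
      have t2 : ((Kn n : ℝ) * ((Ln n : ℝ)^2 * A2))^2 ≤ ((D*n) * ((D*n)^2 * A2))^2 := by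
        refine pow_le_pow_left₀ (by positivity) ?_ 2
        have hL2 : (Ln n : ℝ)^2 ≤ (D*n)^2 := pow_le_pow_left₀ hLnn (hLD n hn) 2
        exact mul_le_mul (hKD n hn) (mul_le_mul_of_nonneg_right hL2 hA2nn)
          (by positivity) (by positivity)
      have e2 : (D*n) * ((D*n)^4 * A4) = (D^5*A4) * (n:ℝ)^5 := by ring
      have e3 : ((D*n) * ((D*n)^2 * A2))^2 = (D^3*A2)^2 * (n:ℝ)^6 := by ring
      have h5 : (n:ℝ)^5 ≤ (n:ℝ)^6 := pow_le_pow_right₀ hn1 (by norm_num)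
      have hD5A4 : 0 ≤ D^5*A4 := mul_nonneg (pow_nonneg hD0 5) hA4nn
      have h6 := mul_le_mul_of_nonneg_left h5 hD5A4
      rw [e2] at t1
      rw [e3] at t2
      calc (∫ ω, S n ω ^ 4 ∂ℙ) ≤ _ := h
        _ ≤ (D^5*A4) * (n:ℝ)^6 + 3*((D^3*A2)^2 * (n:ℝ)^6) := by linarith
        _ = C * (n:ℝ)^6 := by rw [hCdef]; ring
    rw [e1]
    calc ((n:ℝ)^8)⁻¹ * (∫ ω, S n ω ^ 4 ∂ℙ) ≤ ((n:ℝ)^8)⁻¹ * (C * (n:ℝ)^6) :=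
        mul_le_mul_of_nonneg_left hB (by positivity)
      _ = C / (n:ℝ)^2 := by field_simp
  -- summability and Borel-Cantelli style conclusion
  have hsum : Summable (fun n : ℕ => C / (n:ℝ)^2) := by
    have h := Real.summable_one_div_nat_pow.mpr (le_refl 2)
    exact (h.mul_left C).congr fun n => by field_simp
  have hofReal : (∑' n : ℕ, ENNReal.ofReal (C/(n:ℝ)^2)) ≠ ⊤ := by
    rw [← ENNReal.ofReal_tsum_of_nonneg (fun n => div_nonneg hC0 (by positivity)) hsum]
    exact ENNReal.ofReal_ne_top
  have hlintle : ∀ n, (∫⁻ ω, ENNReal.ofReal (f n ω) ∂ℙ) ≤ ENNReal.ofReal (C/(n:ℝ)^2) := by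
    intro n
    rw [← ofReal_integral_eq_lintegral_ofReal (hfint n) (ae_of_all _ (hfnn n))]
    apply ENNReal.ofReal_le_ofReal
    rcases Nat.eq_zero_or_pos n with rfl | hn
    · have hf0 : f 0 = fun _ => (0:ℝ) := by
        funext ω; simp only [hfdef]; norm_num
      rw [hf0]
      simp only [integral_zero]
      exact div_nonneg hC0 (by positivity)
    · exact hfbd n hn
  have htsum : (∫⁻ ω, ∑' n, ENNReal.ofReal (f n ω) ∂ℙ) ≠ ⊤ := by
    rw [lintegral_tsum (fun n => ((hfmeas n).ennreal_ofReal).aemeasurable)]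
    exact ne_top_of_le_ne_top hofReal (ENNReal.tsum_le_tsum hlintle)
  have hae : ∀ᵐ ω ∂(ℙ : Measure Ω), (∑' n, ENNReal.ofReal (f n ω)) < ⊤ :=
    ae_lt_top (Measurable.ennreal_tsum fun n => (hfmeas n).ennreal_ofReal) htsum
  filter_upwards [hae] with ω hω
  have hsummable : Summable (fun n => f n ω) := by
    have h1 := ENNReal.summable_toReal hω.ne
    exact h1.congr fun n => ENNReal.toReal_ofReal (hfnn n ω)
  have h4 := hsummable.tendsto_atTop_zero
  have hc : Tendsto Real.sqrt (nhds 0) (nhds 0) := by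
    have := Real.continuous_sqrt.tendsto 0
    rwa [Real.sqrt_zero] at this
  have hsq : Tendsto (fun n => Real.sqrt (Real.sqrt (f n ω))) atTop (nhds 0) :=
    hc.comp (hc.comp h4)
  have habs : ∀ n : ℕ, |(n:ℝ)^(-2:ℤ) * S n ω| = Real.sqrt (Real.sqrt (f n ω)) := by
    intro n
    have he : f n ω = (((n:ℝ)^(-2:ℤ) * S n ω)^2)^2 := by simp only [hfdef]; ring
    rw [he, Real.sqrt_sq (sq_nonneg _), Real.sqrt_sq_eq_abs]
  have hfin : Tendsto (fun n : ℕ => (n:ℝ)^(-2:ℤ) * S n ω) atTop (nhds 0) := by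
    rw [tendsto_zero_iff_abs_tendsto_zero]
    exact hsq.congr fun n : ℕ => (habs n).symm
  exact hfin
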